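/- In the *-algebra generated by ζ₁ = R⁻¹a and ζ₂ = bR⁻¹ (in any representation of Σ⁴_q where R is invertible), the relations ζ₁ζ₂ = q⁻¹ζ₂ζ₁, ζ₁ζ₁* = q⁻²ζ₁*ζ₁ + (1-q²), ζ₁ζ₂* = q⁻¹ζ₂*ζ₁, and ζ₂ζ₂* = q²ζ₂*ζ₂ - (1-q²)(q² + ζ₁*ζ₁) hold. -/

import Mathlib

/-- In any unital *-algebra containing elements `a`, `b`, `R` satisfying the
`Σ⁴_q` relations with `R` self-adjoint and invertible, the "stereographic"
elements `ζ₁ = R⁻¹a` and `ζ₂ = bR⁻¹` satisfy the relations of the quantum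
plane `ℂ²_q`: `ζ₁ζ₂ = q⁻¹ζ₂ζ₁`, `ζ₁ζ₁* = q⁻²ζ₁*ζ₁ + (1-q²)`,
`ζ₁ζ₂* = q⁻¹ζ₂*ζ₁`, `ζ₂ζ₂* = q²ζ₂*ζ₂ - (1-q²)(q² + ζ₁*ζ₁)`. -/
theorem quantum_stereographic_relations
    (q : ℝ) (hq : q ≠ 0)
    (A : Type*) [Ring A] [StarRing A] [Algebra ℝ A]
    (a b R Rinv : A) (hRsa : star R = R)
    (hRinv₁ : Rinv * R = 1) (hRinv₂ : R * Rinv = 1)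
    (rel1 : R * a = (q ^ 2)⁻¹ • (a * R))
    (rel2 : R * b = q ^ 2 • (b * R))
    (rel3 : a * b = q ^ 3 • (b * a))
    (rel4 : a * star b = q⁻¹ • (star b * a))
    (rel5 : a * star a + q ^ 2 • (b * star b) = R * (1 - q ^ 2 • R))
    (rel6 : a * star a = q ^ 2 • (star a * a) + (1 - q ^ 2) • R ^ 2)
    (rel7 : star b * b = q ^ 4 • (b * star b) + (1 - q ^ 2) • R)
    (ζ₁ ζ₂ : A) (hζ₁ : ζ₁ = Rinv * a) (hζ₂ : ζ₂ = b * Rinv) :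
    ζ₁ * ζ₂ = q⁻¹ • (ζ₂ * ζ₁) ∧
    ζ₁ * star ζ₁ = (q ^ 2)⁻¹ • (star ζ₁ * ζ₁) + (1 - q ^ 2) • (1 : A) ∧
    ζ₁ * star ζ₂ = q⁻¹ • (star ζ₂ * ζ₁) ∧
    ζ₂ * star ζ₂ = q ^ 2 • (star ζ₂ * ζ₂) -
      (1 - q ^ 2) • (q ^ 2 • (1 : A) + star ζ₁ * ζ₁) := by
  have hq2 : (q ^ 2 : ℝ) ≠ 0 := pow_ne_zero _ hq
  have hq3 : (q ^ 3 : ℝ) ≠ 0 := pow_ne_zero _ hq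
  have hsRinv : star Rinv = Rinv := by
    have h1 : star Rinv * R = 1 := by
      rw [← hRsa, ← star_mul, hRinv₂, star_one]
    calc star Rinv = star Rinv * (R * Rinv) := by rw [hRinv₂, mul_one]
      _ = (star Rinv * R) * Rinv := by rw [mul_assoc]
      _ = Rinv := by rw [h1, one_mul]
  -- star of a scalar action
  have hsmul : ∀ (c : ℝ) (x : A), star (c • x) = star x * star (c • (1:A)) := by
    intro c x
    have h : c • x = (c • (1:A)) * x := by rw [smul_mul_assoc, one_mul]
    rw [h, star_mul]
  have hcent : ∀ (c : ℝ) (y : A), star (c • (1:A)) * y = y * star (c • (1:A)) := by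
    intro c y
    have h1 : (c • (1:A)) * star y = star y * (c • (1:A)) := by
      rw [smul_mul_assoc, one_mul, mul_smul_comm, mul_one]
    have h2 := congrArg star h1
    rw [star_mul, star_mul, star_star] at h2
    exact h2.symm
  have hs_mul : ∀ c₁ c₂ : ℝ,
      star ((c₁ * c₂) • (1:A)) = star (c₁ • (1:A)) * star (c₂ • (1:A)) := by
    intro c₁ c₂
    have h : (c₁ * c₂) • (1:A) = (c₂ • (1:A)) * (c₁ • (1:A)) := by
      rw [smul_mul_assoc, one_mul, smul_smul, mul_comm c₂ c₁]
    rw [h, star_mul]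
  obtain ⟨u, hu_def⟩ : ∃ u : A, u = star (q⁻¹ • (1:A)) := ⟨_, rfl⟩
  have uc : ∀ y : A, u * y = y * u := by
    intro y; rw [hu_def]; exact hcent _ _
  have E4 : b * star a = (star a * b) * u := by
    have h := congrArg star rel4
    rw [star_mul, star_star] at h
    rw [hsmul q⁻¹ (star b * a), star_mul, star_star, ← hu_def] at h
    exact h
  have rel6' : a * star a = q ^ 2 • (star a * a) + (1 - q ^ 2) • (R * R) := by
    rw [rel6, pow_two R]
  have hba0 : b * a = (q ^ 3)⁻¹ • (a * b) := by
    rw [rel3, smul_smul, inv_mul_cancel₀ hq3, one_smul]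
  have hRRb : (R * R) * b = (q ^ 2 * q ^ 2) • (b * (R * R)) := by
    rw [mul_assoc, rel2, mul_smul_comm, ← mul_assoc, rel2, smul_mul_assoc,
      smul_smul, mul_assoc]
  have hbsay : ∀ y : A, b * (star a * y) = star a * ((b * y) * u) := by
    intro y
    calc b * (star a * y) = ((star a * b) * u) * y := by rw [← mul_assoc, E4]
      _ = (star a * b) * (y * u) := by rw [mul_assoc, uc y]
      _ = star a * ((b * y) * u) := by
          rw [← mul_assoc, mul_assoc (star a) b y, mul_assoc]
  have hT1 : b * (a * star a) =
      q⁻¹ • (star a * ((a * b) * u)) + (1 - q ^ 2) • (b * (R * R)) := by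
    rw [rel6', mul_add, mul_smul_comm, mul_smul_comm, hbsay, hba0,
      smul_mul_assoc, mul_smul_comm, smul_smul]
    match_scalars <;> field_simp <;> ring
  have hT2 : b * (a * star a) =
      q⁻¹ • (star a * ((a * b) * u)) + (q * (1 - q ^ 2)) • ((b * (R * R)) * u) := by
    rw [← mul_assoc, hba0, smul_mul_assoc, mul_assoc, E4,
      mul_assoc (star a) b u, ← mul_assoc a (star a) (b * u), rel6',
      add_mul, smul_mul_assoc, smul_mul_assoc,
      mul_assoc (star a) a (b * u), ← mul_assoc a b u,
      ← mul_assoc (R * R) b u, hRRb, smul_mul_assoc]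
    match_scalars <;> field_simp <;> ring
  have hRR : ∀ y : A, Rinv * (R * y) = y := fun y => by
    rw [← mul_assoc, hRinv₁, one_mul]
  have hRR' : ∀ y : A, R * (Rinv * y) = y := fun y => by
    rw [← mul_assoc, hRinv₂, one_mul]
  have EqA : (1 - q ^ 2) • (b * (R * R)) =
      (q * (1 - q ^ 2)) • ((b * (R * R)) * u) :=
    add_left_cancel (hT1.symm.trans hT2)
  have EqB : (1 - q ^ 2) • b = (q * (1 - q ^ 2)) • (b * u) := by
    have h := congrArg (· * (Rinv * Rinv)) EqA
    simp only [smul_mul_assoc, mul_assoc, uc, hRR', hRinv₂, mul_one] at h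
    exact h
  have EqQ : (1 - q ^ 2) • (b * star b) =
      (q * (1 - q ^ 2)) • (b * (star b * u)) := by
    have h := congrArg (· * star b) EqB
    simp only [smul_mul_assoc, mul_assoc, uc] at h
    exact h
  have rsbb : ∀ y : A, star b * (b * y) =
      q ^ 4 • (b * (star b * y)) + (1 - q ^ 2) • (R * y) := by
    intro y
    rw [← mul_assoc, rel7, add_mul, smul_mul_assoc, smul_mul_assoc, mul_assoc]
  have L1 : (1 - q ^ 2) • (q ^ 4 • (b * star b) + (1 - q ^ 2) • R) =
      (q * (1 - q ^ 2)) • (q ^ 4 • (b * (star b * u)) + (1 - q ^ 2) • (R * u)) := by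
    have h := congrArg (star b * ·) EqB
    simp only [mul_smul_comm] at h
    rw [rel7, rsbb] at h
    exact h
  have EqR : (1 - q ^ 2) ^ 2 • R = (q * (1 - q ^ 2) ^ 2) • (R * u) := by
    calc (1 - q ^ 2) ^ 2 • R
        = (1 - q ^ 2) • (q ^ 4 • (b * star b) + (1 - q ^ 2) • R)
            - q ^ 4 • ((1 - q ^ 2) • (b * star b)) := by
          match_scalars <;> ring
      _ = (q * (1 - q ^ 2)) • (q ^ 4 • (b * (star b * u)) + (1 - q ^ 2) • (R * u))
            - q ^ 4 • ((q * (1 - q ^ 2)) • (b * (star b * u))) := by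
          rw [L1, EqQ]
      _ = (q * (1 - q ^ 2) ^ 2) • (R * u) := by match_scalars <;> ring
  have EqC : (1 - q ^ 2) ^ 2 • (1:A) = (q * (1 - q ^ 2) ^ 2) • u := by
    have h := congrArg (· * Rinv) EqR
    simp only [smul_mul_assoc, mul_assoc, uc, hRinv₂, one_mul, mul_one] at h
    rw [← mul_assoc R Rinv u, hRinv₂, one_mul] at h
    exact h
  -- the key fact: star fixes the scalar q² • 1
  have ht : star ((q ^ 2 : ℝ) • (1:A)) = (q ^ 2 : ℝ) • (1:A) := by
    by_cases hq1 : (q ^ 2 : ℝ) = 1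
    · rw [hq1, one_smul, star_one]
    · have h1q : (1 - q ^ 2 : ℝ) ≠ 0 := sub_ne_zero.mpr (Ne.symm hq1)
      have hden : (q * (1 - q ^ 2) ^ 2 : ℝ) ≠ 0 :=
        mul_ne_zero hq (pow_ne_zero _ h1q)
      have hu : u = q⁻¹ • (1:A) := by
        have h := congrArg (fun z => (q * (1 - q ^ 2) ^ 2 : ℝ)⁻¹ • z) EqC
        simp only [smul_smul] at h
        rw [inv_mul_cancel₀ hden, one_smul] at h
        rw [← h]
        congr 1
        field_simp
      have h4 : ((q⁻¹ * q⁻¹) • (1:A)) * ((q ^ 2 : ℝ) • (1:A)) = 1 := by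
        rw [smul_mul_assoc, one_mul, smul_smul,
          show (q⁻¹ * q⁻¹ * q ^ 2 : ℝ) = 1 by field_simp, one_smul]
      have h2 : star ((q ^ 2 : ℝ) • (1:A)) * ((q⁻¹ * q⁻¹) • (1:A)) = 1 := by
        have h3 := hs_mul (q ^ 2) (q⁻¹ * q⁻¹)
        rw [show (q ^ 2 * (q⁻¹ * q⁻¹) : ℝ) = 1 by field_simp, one_smul,
          star_one] at h3
        rw [hs_mul q⁻¹ q⁻¹, ← hu_def, hu] at h3
        rw [smul_mul_assoc, one_mul, smul_smul] at h3
        exact h3.symm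
      calc star ((q ^ 2 : ℝ) • (1:A))
          = star ((q ^ 2 : ℝ) • (1:A)) *
              (((q⁻¹ * q⁻¹) • (1:A)) * ((q ^ 2 : ℝ) • (1:A))) := by
            rw [h4, mul_one]
        _ = (star ((q ^ 2 : ℝ) • (1:A)) * ((q⁻¹ * q⁻¹) • (1:A))) *
              ((q ^ 2 : ℝ) • (1:A)) := by rw [mul_assoc]
        _ = (q ^ 2 : ℝ) • (1:A) := by rw [h2, one_mul]
  have ht' : star (((q ^ 2 : ℝ))⁻¹ • (1:A)) = ((q ^ 2 : ℝ))⁻¹ • (1:A) := by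
    have h3 := hs_mul (q ^ 2)⁻¹ (q ^ 2)
    rw [inv_mul_cancel₀ hq2, one_smul, star_one, ht] at h3
    -- h3 : 1 = star ((q^2)⁻¹ • 1) * (q^2 • 1)
    have h4 : ((q ^ 2 : ℝ) • (1:A)) * (((q ^ 2 : ℝ))⁻¹ • (1:A)) = 1 := by
      rw [smul_mul_assoc, one_mul, smul_smul, mul_inv_cancel₀ hq2, one_smul]
    calc star (((q ^ 2 : ℝ))⁻¹ • (1:A))
        = star (((q ^ 2 : ℝ))⁻¹ • (1:A)) *
            (((q ^ 2 : ℝ) • (1:A)) * (((q ^ 2 : ℝ))⁻¹ • (1:A))) := by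
          rw [h4, mul_one]
      _ = (star (((q ^ 2 : ℝ))⁻¹ • (1:A)) * ((q ^ 2 : ℝ) • (1:A))) *
            (((q ^ 2 : ℝ))⁻¹ • (1:A)) := by rw [mul_assoc]
      _ = ((q ^ 2 : ℝ))⁻¹ • (1:A) := by rw [← h3, one_mul]
  -- starred versions of rel1 and rel2
  have hRsa' : R * star a = q ^ 2 • (star a * R) := by
    have h := congrArg star rel1
    rw [hsmul (q ^ 2)⁻¹ (a * R), ht', star_mul, star_mul, hRsa] at h
    rw [mul_smul_comm, mul_one] at h
    -- h : star a * R = (q^2)⁻¹ • (R * star a)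
    rw [h, smul_smul, mul_inv_cancel₀ hq2, one_smul]
  have hRsb' : R * star b = (q ^ 2)⁻¹ • (star b * R) := by
    have h := congrArg star rel2
    rw [hsmul (q ^ 2) (b * R), ht, star_mul, star_mul, hRsa] at h
    rw [mul_smul_comm, mul_one] at h
    -- h : star b * R = q^2 • (R * star b)
    rw [h, smul_smul, inv_mul_cancel₀ hq2, one_smul]
  -- commutation of Rinv with the generators
  have hgen : ∀ (c : ℝ) (x : A), c ≠ 0 → R * x = c • (x * R) →
      Rinv * x = c⁻¹ • (x * Rinv) := by
    intro c x hc h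
    have hx : x * R = c⁻¹ • (R * x) := by
      rw [h, smul_smul, inv_mul_cancel₀ hc, one_smul]
    calc Rinv * x = Rinv * ((x * R) * Rinv) := by rw [mul_assoc, hRinv₂, mul_one]
      _ = c⁻¹ • (((Rinv * R) * x) * Rinv) := by
          rw [hx]; simp only [smul_mul_assoc, mul_smul_comm, mul_assoc]
      _ = c⁻¹ • (x * Rinv) := by rw [hRinv₁, one_mul]
  have pa0 : Rinv * a = q ^ 2 • (a * Rinv) := by
    simpa using hgen _ a (inv_ne_zero hq2) rel1
  have pb0 : Rinv * b = (q ^ 2)⁻¹ • (b * Rinv) := hgen _ b hq2 rel2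
  have psa0 : Rinv * star a = (q ^ 2)⁻¹ • (star a * Rinv) := hgen _ _ hq2 hRsa'
  have psb0 : Rinv * star b = q ^ 2 • (star b * Rinv) := by
    simpa using hgen _ _ (inv_ne_zero hq2) hRsb'
  have par : ∀ (c : ℝ) (x : A), Rinv * x = c • (x * Rinv) →
      ∀ y, Rinv * (x * y) = c • (x * (Rinv * y)) := by
    intro c x h y
    rw [← mul_assoc, h, smul_mul_assoc, mul_assoc]
  have pa := par _ _ pa0
  have pb := par _ _ pb0
  have psa := par _ _ psa0
  have psb := par _ _ psb0
  have exch : ∀ (c : ℝ) (x z : A), x * z = c • (z * x) →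
      ∀ y, x * (z * y) = c • (z * (x * y)) := by
    intro c x z h y
    rw [← mul_assoc, h, smul_mul_assoc, mul_assoc]
  have rab := exch _ _ _ rel3
  have rasb := exch _ _ _ rel4
  have rasa : ∀ y, a * (star a * y) =
      q ^ 2 • (star a * (a * y)) + (1 - q ^ 2) • (R * (R * y)) := by
    intro y
    rw [← mul_assoc, rel6', add_mul, smul_mul_assoc, smul_mul_assoc, mul_assoc,
      mul_assoc]
  have key : q ^ 2 • (star a * a) + q ^ 2 • (b * star b) = R - R * R := by
    have h5 := rel5
    rw [rel6'] at h5
    rw [mul_sub, mul_one, mul_smul_comm] at h5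
    calc q ^ 2 • (star a * a) + q ^ 2 • (b * star b)
        = (q ^ 2 • (star a * a) + (1 - q ^ 2) • (R * R) + q ^ 2 • (b * star b))
            - (1 - q ^ 2) • (R * R) := by module
      _ = (R - q ^ 2 • (R * R)) - (1 - q ^ 2) • (R * R) := by rw [h5]
      _ = R - R * R := by module
  have key2 : Rinv = 1 + (q ^ 2 • (star a * (a * (Rinv * Rinv))) +
      q ^ 2 • (b * (star b * (Rinv * Rinv)))) := by
    have h := congrArg (· * (Rinv * Rinv)) key
    simp only [add_mul, sub_mul, smul_mul_assoc, mul_assoc, hRR', hRinv₂,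
      mul_one, one_mul] at h
    rw [h]
    abel
  refine ⟨?_, ?_, ?_, ?_⟩
  · simp only [hζ₁, hζ₂, mul_assoc, rab, rel3, pa, pa0, pb, pb0, smul_mul_assoc,
      mul_smul_comm, smul_smul, hRR, hRR', hRinv₁, hRinv₂, mul_one, one_mul]
    match_scalars
    field_simp
  · simp only [hζ₁, hζ₂]
    simp only [star_mul, hsRinv]
    simp only [mul_assoc, rasa, pa, pa0, psa, psa0,
      smul_mul_assoc, mul_smul_comm, smul_smul, mul_add, add_mul, smul_add,
      hRR, hRR', hRinv₁, hRinv₂, mul_one, one_mul]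
    match_scalars <;> field_simp <;> ring
  · simp only [hζ₁, hζ₂]
    simp only [star_mul, hsRinv]
    simp only [mul_assoc, rasb, rel4, pa, pa0, psb,
      psb0, smul_mul_assoc, mul_smul_comm, smul_smul, hRR, hRR', hRinv₁,
      hRinv₂, mul_one, one_mul]
    match_scalars <;> field_simp <;> ring
  · simp only [hζ₁, hζ₂]
    simp only [star_mul, hsRinv]
    simp only [mul_assoc, rsbb, rel7, pa, pa0, pb,
      pb0, psa, psa0, psb, psb0, rasa, smul_mul_assoc, mul_smul_comm, smul_smul,
      mul_add, add_mul, smul_add, smul_sub, mul_sub, sub_mul, hRR, hRR',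
      hRinv₁, hRinv₂, mul_one, one_mul]
    generalize hX : star a * (a * (Rinv * Rinv)) = X at key2 ⊢
    generalize hY : b * (star b * (Rinv * Rinv)) = Y at key2 ⊢
    rw [key2]
    match_scalars <;> field_simp <;> ring
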